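/- The set S = {(α, A, β) : α, β ∈ L*, ∅ ≠ A ∈ I_α ∩ I_β} ∪ {0} with the stated multiplication and involution (α,A,β)* = (β,A,α) is an inverse semigroup, whose nonzero idempotents are exactly the elements of the form (α, A, α). -/

import Mathlib

/-- θ of a word: θ_{α₁…αₙ} = θ_{αₙ} ∘ … ∘ θ_{α₁}. -/
def thetaW {𝓑 L : Type*} (θ : L → 𝓑 → 𝓑) : List L → 𝓑 → 𝓑
  | [], x => x
  | a :: l, x => thetaW θ l (θ a x)

/-- The ideal I_α associated to a word α: I_ω = B and
I_α = {A : A ≤ θ_{α₂…αₙ}(B') for some B' ∈ I_{α₁}}. -/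
def Iw {𝓑 L : Type*} [GeneralizedBooleanAlgebra 𝓑] (θ : L → 𝓑 → 𝓑)
    (𝓘 : L → Set 𝓑) : List L → Set 𝓑
  | [] => Set.univ
  | a :: l => {A | ∃ B' ∈ 𝓘 a, A ≤ thetaW θ l B'}

/-- Triples (α, A, β) together with a zero element. -/
abbrev Tr (L 𝓑 : Type*) := Option (List L × 𝓑 × List L)

/-- The multiplication of the inverse semigroup of a generalized Boolean
dynamical system. -/
def trMul {𝓑 L : Type*} [GeneralizedBooleanAlgebra 𝓑] [DecidableEq L]
    [DecidableEq 𝓑] (θ : L → 𝓑 → 𝓑) : Tr L 𝓑 → Tr L 𝓑 → Tr L 𝓑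
  | none, _ => none
  | _, none => none
  | some (α, A, β), some (γ, C, δ) =>
    if β = γ then
      (if A ⊓ C = ⊥ then none else some (α, A ⊓ C, δ))
    else if β <+: γ then
      (if thetaW θ (γ.drop β.length) A ⊓ C = ⊥ then none
       else some (α ++ γ.drop β.length, thetaW θ (γ.drop β.length) A ⊓ C, δ))
    else if γ <+: β then
      (if A ⊓ thetaW θ (β.drop γ.length) C = ⊥ then none
       else some (α, A ⊓ thetaW θ (β.drop γ.length) C, δ ++ β.drop γ.length))
    else none

/-- The underlying set of the inverse semigroup S: the zero element together
with all triples (α, A, β) with ∅ ≠ A ∈ I_α ∩ I_β. -/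
def trS {𝓑 L : Type*} [GeneralizedBooleanAlgebra 𝓑] (θ : L → 𝓑 → 𝓑)
    (𝓘 : L → Set 𝓑) : Set (Tr L 𝓑) :=
  insert none {x | ∃ α A β, x = some (α, A, β) ∧ A ≠ ⊥ ∧
    A ∈ Iw θ 𝓘 α ∧ A ∈ Iw θ 𝓘 β}

set_option linter.unusedSectionVars false

section Aux
variable {𝓑 L : Type*} [GeneralizedBooleanAlgebra 𝓑] [DecidableEq L] [DecidableEq 𝓑]
variable (θ : L → 𝓑 → 𝓑)

lemma thetaW_bot (hθbot : ∀ a, θ a ⊥ = ⊥) : ∀ l, thetaW θ l ⊥ = ⊥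
  | [] => rfl
  | a :: l => by rw [thetaW, hθbot, thetaW_bot hθbot l]

lemma thetaW_inf (hθinf : ∀ a (x y : 𝓑), θ a (x ⊓ y) = θ a x ⊓ θ a y) :
    ∀ l (x y : 𝓑), thetaW θ l (x ⊓ y) = thetaW θ l x ⊓ thetaW θ l y
  | [], x, y => rfl
  | a :: l, x, y => by rw [thetaW, hθinf, thetaW_inf hθinf l, thetaW, thetaW]

lemma thetaW_mono (hθinf : ∀ a (x y : 𝓑), θ a (x ⊓ y) = θ a x ⊓ θ a y)
    (l : List L) {x y : 𝓑} (h : x ≤ y) : thetaW θ l x ≤ thetaW θ l y := by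
  have : thetaW θ l x ⊓ thetaW θ l y = thetaW θ l x := by
    rw [← thetaW_inf θ hθinf, inf_eq_left.mpr h]
  exact inf_eq_left.mp this

lemma thetaW_append : ∀ (l₁ l₂ : List L) (x : 𝓑),
    thetaW θ (l₁ ++ l₂) x = thetaW θ l₂ (thetaW θ l₁ x)
  | [], l₂, x => rfl
  | a :: l₁, l₂, x => by rw [List.cons_append, thetaW, thetaW, thetaW_append l₁ l₂]

variable (𝓘 : L → Set 𝓑)

lemma Iw_down {α : List L} {A B : 𝓑} (hA : A ∈ Iw θ 𝓘 α) (h : B ≤ A) :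
    B ∈ Iw θ 𝓘 α := by
  cases α with
  | nil => trivial
  | cons a l =>
    obtain ⟨B', hB', hle⟩ := hA
    exact ⟨B', hB', h.trans hle⟩

lemma Iw_theta (hθinf : ∀ a (x y : 𝓑), θ a (x ⊓ y) = θ a x ⊓ θ a y)
    (h𝓘F : ∀ a (x : 𝓑), θ a x ∈ 𝓘 a)
    {α : List L} {A : 𝓑} (hA : A ∈ Iw θ 𝓘 α) (γ : List L) :
    thetaW θ γ A ∈ Iw θ 𝓘 (α ++ γ) := by
  cases α with
  | nil =>
    simp only [List.nil_append]
    cases γ with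
    | nil => trivial
    | cons a l => exact ⟨θ a A, h𝓘F a A, le_of_eq rfl⟩
  | cons a l =>
    obtain ⟨B', hB', hle⟩ := hA
    refine ⟨B', hB', ?_⟩
    show thetaW θ γ A ≤ thetaW θ (l ++ γ) B'
    rw [thetaW_append]
    exact thetaW_mono θ hθinf γ hle
end Aux

section Aux2
variable {𝓑 L : Type*} [GeneralizedBooleanAlgebra 𝓑] [DecidableEq L] [DecidableEq 𝓑]
variable (θ : L → 𝓑 → 𝓑)

/-- Uniform form of the multiplication on triples. -/
def pmul (α : List L) (A : 𝓑) (β γ : List L) (C : 𝓑) (δ : List L) : Tr L 𝓑 :=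
  if β <+: γ then
    (if thetaW θ (γ.drop β.length) A ⊓ C = ⊥ then none
     else some (α ++ γ.drop β.length, thetaW θ (γ.drop β.length) A ⊓ C, δ))
  else if γ <+: β then
    (if A ⊓ thetaW θ (β.drop γ.length) C = ⊥ then none
     else some (α, A ⊓ thetaW θ (β.drop γ.length) C, δ ++ β.drop γ.length))
  else none

lemma trMul_some_some (α : List L) (A : 𝓑) (β γ : List L) (C : 𝓑) (δ : List L) :
    trMul θ (some (α, A, β)) (some (γ, C, δ)) = pmul θ α A β γ C δ := by
  unfold trMul pmul
  by_cases h : β = γ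
  · subst h
    simp [List.prefix_refl, List.drop_length, thetaW]
  · simp [h]

lemma pmul_left (α : List L) (A : 𝓑) (β u : List L) (C : 𝓑) (δ : List L) :
    pmul θ α A β (β ++ u) C δ =
      if thetaW θ u A ⊓ C = ⊥ then none
      else some (α ++ u, thetaW θ u A ⊓ C, δ) := by
  unfold pmul
  rw [if_pos (List.prefix_append β u), List.drop_left]

lemma pmul_right (α : List L) (A : 𝓑) (γ u : List L) (C : 𝓑) (δ : List L) (hu : u ≠ []) :
    pmul θ α A (γ ++ u) γ C δ =
      if A ⊓ thetaW θ u C = ⊥ then none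
      else some (α, A ⊓ thetaW θ u C, δ ++ u) := by
  unfold pmul
  have h1 : ¬ (γ ++ u <+: γ) := by
    intro h
    have := h.length_le
    simp at this
    exact hu this
  rw [if_neg h1, if_pos (List.prefix_append γ u), List.drop_left]

end Aux2

section Aux3
variable {𝓑 L : Type*} [GeneralizedBooleanAlgebra 𝓑] [DecidableEq L] [DecidableEq 𝓑]
variable (θ : L → 𝓑 → 𝓑)

lemma pmul_right_any (α : List L) (A : 𝓑) (γ u : List L) (C : 𝓑) (δ : List L) :
    pmul θ α A (γ ++ u) γ C δ =
      if A ⊓ thetaW θ u C = ⊥ then none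
      else some (α, A ⊓ thetaW θ u C, δ ++ u) := by
  rcases eq_or_ne u [] with rfl | hu
  · simp only [List.append_nil]
    unfold pmul
    simp [List.prefix_refl, List.drop_length, thetaW]
    congr
  · exact pmul_right θ α A γ u C δ hu

lemma pmul_incomp (α : List L) (A : 𝓑) (β γ : List L) (C : 𝓑) (δ : List L)
    (h1 : ¬ β <+: γ) (h2 : ¬ γ <+: β) : pmul θ α A β γ C δ = none := by
  unfold pmul
  rw [if_neg h1, if_neg h2]

lemma trMul_none_right (x : Tr L 𝓑) : trMul θ x none = none := by
  cases x <;> rfl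

lemma incomp_append {β γ : List L} (h1 : ¬ β <+: γ) (h2 : ¬ γ <+: β) (v : List L) :
    ¬ β <+: γ ++ v ∧ ¬ γ ++ v <+: β := by
  constructor
  · intro h
    rcases List.prefix_or_prefix_of_prefix h (List.prefix_append γ v) with h' | h'
    · exact h1 h'
    · exact h2 h'
  · intro h
    exact h2 ((List.prefix_append γ v).trans h)

end Aux3

section Aux4
variable {𝓑 L : Type*} [GeneralizedBooleanAlgebra 𝓑] [DecidableEq L] [DecidableEq 𝓑]
variable (θ : L → 𝓑 → 𝓑)

lemma trMul_none_left (x : Tr L 𝓑) : trMul θ none x = none := by cases x <;> rfl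

lemma trMul_assoc (hθbot : ∀ a, θ a ⊥ = ⊥)
    (hθinf : ∀ a (x y : 𝓑), θ a (x ⊓ y) = θ a x ⊓ θ a y) (x y z : Tr L 𝓑) :
    trMul θ (trMul θ x y) z = trMul θ x (trMul θ y z) := by
  rcases x with _ | ⟨α, A, β⟩
  · rw [trMul_none_left, trMul_none_left, trMul_none_left]
  rcases y with _ | ⟨γ, C, δ⟩
  · rw [trMul_none_right, trMul_none_left]
    exact (trMul_none_right θ _).symm
  rcases z with _ | ⟨ε, E, ζ⟩
  · rw [trMul_none_right, trMul_none_right, trMul_none_right]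
  rw [trMul_some_some θ α A β γ C δ, trMul_some_some θ γ C δ ε E ζ]
  by_cases h1 : β <+: γ
  · obtain ⟨u, rfl⟩ := h1
    rw [pmul_left]
    by_cases h2 : δ <+: ε
    · obtain ⟨v, rfl⟩ := h2
      rw [pmul_left]
      have key : thetaW θ v (thetaW θ u A ⊓ C) ⊓ E
          = thetaW θ (u ++ v) A ⊓ (thetaW θ v C ⊓ E) := by
        rw [thetaW_inf θ hθinf, thetaW_append θ u v]; exact inf_assoc _ _ _
      by_cases hb1 : thetaW θ u A ⊓ C = ⊥
      · rw [if_pos hb1, trMul_none_left]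
        by_cases hb2 : thetaW θ v C ⊓ E = ⊥
        · rw [if_pos hb2, trMul_none_right]
        · rw [if_neg hb2, trMul_some_some, List.append_assoc β u v, pmul_left,
            if_pos (by rw [← key, hb1, thetaW_bot θ hθbot]; simp)]
      · rw [if_neg hb1, trMul_some_some, pmul_left, key]
        by_cases hb2 : thetaW θ v C ⊓ E = ⊥
        · rw [if_pos hb2, trMul_none_right, if_pos (by rw [hb2]; simp)]
        · rw [if_neg hb2, trMul_some_some, List.append_assoc β u v, pmul_left,
            List.append_assoc α u v]
    · by_cases h3 : ε <+: δ
      · obtain ⟨w, rfl⟩ := h3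
        rw [pmul_right_any]
        by_cases hb1 : thetaW θ u A ⊓ C = ⊥
        · rw [if_pos hb1, trMul_none_left]
          by_cases hb2 : C ⊓ thetaW θ w E = ⊥
          · rw [if_pos hb2, trMul_none_right]
          · rw [if_neg hb2, trMul_some_some, pmul_left,
              if_pos (by rw [← inf_assoc, hb1]; simp)]
        · rw [if_neg hb1, trMul_some_some, pmul_right_any, inf_assoc]
          by_cases hb2 : C ⊓ thetaW θ w E = ⊥
          · rw [if_pos hb2, trMul_none_right, if_pos (by rw [hb2]; simp)]
          · rw [if_neg hb2, trMul_some_some, pmul_left]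
      · rw [pmul_incomp θ _ _ _ _ _ _ h2 h3, trMul_none_right]
        by_cases hb1 : thetaW θ u A ⊓ C = ⊥
        · rw [if_pos hb1, trMul_none_left]
        · rw [if_neg hb1, trMul_some_some, pmul_incomp θ _ _ _ _ _ _ h2 h3]
  · by_cases h2 : γ <+: β
    · obtain ⟨u, rfl⟩ := h2
      rw [pmul_right_any]
      by_cases hd : δ <+: ε
      · obtain ⟨v, rfl⟩ := hd
        rw [pmul_left]
        by_cases hv : v <+: u
        · obtain ⟨w, rfl⟩ := hv
          have key : (A ⊓ thetaW θ (v ++ w) C) ⊓ thetaW θ w E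
              = A ⊓ thetaW θ w (thetaW θ v C ⊓ E) := by
            rw [thetaW_inf θ hθinf, thetaW_append θ v w]; exact inf_assoc _ _ _
          by_cases hb1 : A ⊓ thetaW θ (v ++ w) C = ⊥
          · rw [if_pos hb1, trMul_none_left]
            by_cases hb2 : thetaW θ v C ⊓ E = ⊥
            · rw [if_pos hb2, trMul_none_right]
            · rw [if_neg hb2, trMul_some_some,
                show γ ++ (v ++ w) = (γ ++ v) ++ w from (List.append_assoc γ v w).symm,
                pmul_right_any, if_pos (by rw [← key, hb1]; simp)]
          · rw [if_neg hb1, trMul_some_some,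
              show δ ++ (v ++ w) = (δ ++ v) ++ w from (List.append_assoc δ v w).symm,
              pmul_right_any, key]
            by_cases hb2 : thetaW θ v C ⊓ E = ⊥
            · rw [if_pos hb2, trMul_none_right,
                if_pos (by rw [hb2, thetaW_bot θ hθbot]; simp)]
            · rw [if_neg hb2, trMul_some_some,
                show γ ++ (v ++ w) = (γ ++ v) ++ w from (List.append_assoc γ v w).symm,
                pmul_right_any]
        · by_cases hv2 : u <+: v
          · obtain ⟨w, rfl⟩ := hv2
            have key : thetaW θ w (A ⊓ thetaW θ u C) ⊓ E
                = thetaW θ w A ⊓ (thetaW θ (u ++ w) C ⊓ E) := by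
              rw [thetaW_inf θ hθinf, thetaW_append θ u w]; exact inf_assoc _ _ _
            by_cases hb1 : A ⊓ thetaW θ u C = ⊥
            · rw [if_pos hb1, trMul_none_left]
              by_cases hb2 : thetaW θ (u ++ w) C ⊓ E = ⊥
              · rw [if_pos hb2, trMul_none_right]
              · rw [if_neg hb2, trMul_some_some,
                  show γ ++ (u ++ w) = (γ ++ u) ++ w from (List.append_assoc γ u w).symm,
                  pmul_left, if_pos (by rw [← key, hb1, thetaW_bot θ hθbot]; simp)]
            · rw [if_neg hb1, trMul_some_some,
                show δ ++ (u ++ w) = (δ ++ u) ++ w from (List.append_assoc δ u w).symm,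
                pmul_left, key]
              by_cases hb2 : thetaW θ (u ++ w) C ⊓ E = ⊥
              · rw [if_pos hb2, trMul_none_right, if_pos (by rw [hb2]; simp)]
              · rw [if_neg hb2, trMul_some_some,
                  show γ ++ (u ++ w) = (γ ++ u) ++ w from (List.append_assoc γ u w).symm,
                  pmul_left]
          · have hA : ¬ ((δ ++ u) <+: (δ ++ v)) :=
              fun h => hv2 ((List.prefix_append_right_inj δ).mp h)
            have hB : ¬ ((δ ++ v) <+: (δ ++ u)) :=
              fun h => hv ((List.prefix_append_right_inj δ).mp h)
            have hC : ¬ ((γ ++ u) <+: (γ ++ v)) :=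
              fun h => hv2 ((List.prefix_append_right_inj γ).mp h)
            have hD : ¬ ((γ ++ v) <+: (γ ++ u)) :=
              fun h => hv ((List.prefix_append_right_inj γ).mp h)
            by_cases hb1 : A ⊓ thetaW θ u C = ⊥
            · rw [if_pos hb1, trMul_none_left]
              by_cases hb2 : thetaW θ v C ⊓ E = ⊥
              · rw [if_pos hb2, trMul_none_right]
              · rw [if_neg hb2, trMul_some_some, pmul_incomp θ _ _ _ _ _ _ hC hD]
            · rw [if_neg hb1, trMul_some_some, pmul_incomp θ _ _ _ _ _ _ hA hB]
              by_cases hb2 : thetaW θ v C ⊓ E = ⊥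
              · rw [if_pos hb2, trMul_none_right]
              · rw [if_neg hb2, trMul_some_some, pmul_incomp θ _ _ _ _ _ _ hC hD]
      · by_cases he : ε <+: δ
        · obtain ⟨w, rfl⟩ := he
          rw [pmul_right_any]
          have key : (A ⊓ thetaW θ u C) ⊓ thetaW θ (w ++ u) E
              = A ⊓ thetaW θ u (C ⊓ thetaW θ w E) := by
            rw [thetaW_inf θ hθinf, thetaW_append θ w u]; exact inf_assoc _ _ _
          by_cases hb1 : A ⊓ thetaW θ u C = ⊥
          · rw [if_pos hb1, trMul_none_left]
            by_cases hb2 : C ⊓ thetaW θ w E = ⊥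
            · rw [if_pos hb2, trMul_none_right]
            · rw [if_neg hb2, trMul_some_some, pmul_right_any,
                if_pos (by rw [← key, hb1]; simp)]
          · rw [if_neg hb1, trMul_some_some,
              show (ε ++ w) ++ u = ε ++ (w ++ u) from List.append_assoc ε w u,
              pmul_right_any, key]
            by_cases hb2 : C ⊓ thetaW θ w E = ⊥
            · rw [if_pos hb2, trMul_none_right,
                if_pos (by rw [hb2, thetaW_bot θ hθbot]; simp)]
            · rw [if_neg hb2, trMul_some_some, pmul_right_any,
                show (ζ ++ w) ++ u = ζ ++ (w ++ u) from List.append_assoc ζ w u]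
        · rw [pmul_incomp θ _ _ _ _ _ _ hd he, trMul_none_right]
          have hA : ¬ ((δ ++ u) <+: ε) := fun h => hd ((List.prefix_append δ u).trans h)
          have hB : ¬ (ε <+: (δ ++ u)) := by
            intro h
            rcases List.prefix_or_prefix_of_prefix h (List.prefix_append δ u) with h' | h'
            · exact he h'
            · exact hd h'
          by_cases hb1 : A ⊓ thetaW θ u C = ⊥
          · rw [if_pos hb1, trMul_none_left]
          · rw [if_neg hb1, trMul_some_some, pmul_incomp θ _ _ _ _ _ _ hA hB]
    · rw [pmul_incomp θ _ _ _ _ _ _ h1 h2, trMul_none_left]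
      by_cases hd : δ <+: ε
      · obtain ⟨v, rfl⟩ := hd
        rw [pmul_left]
        by_cases hb2 : thetaW θ v C ⊓ E = ⊥
        · rw [if_pos hb2, trMul_none_right]
        · rw [if_neg hb2, trMul_some_some,
            pmul_incomp θ _ _ _ _ _ _ (incomp_append h1 h2 v).1 (incomp_append h1 h2 v).2]
      · by_cases he : ε <+: δ
        · obtain ⟨w, rfl⟩ := he
          rw [pmul_right_any]
          by_cases hb2 : C ⊓ thetaW θ w E = ⊥
          · rw [if_pos hb2, trMul_none_right]
          · rw [if_neg hb2, trMul_some_some, pmul_incomp θ _ _ _ _ _ _ h1 h2]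
        · rw [pmul_incomp θ _ _ _ _ _ _ hd he, trMul_none_right]

end Aux4

section Aux5
variable {𝓑 L : Type*} [GeneralizedBooleanAlgebra 𝓑] [DecidableEq L] [DecidableEq 𝓑]
variable (θ : L → 𝓑 → 𝓑) (𝓘 : L → Set 𝓑)

lemma none_mem_trS : (none : Tr L 𝓑) ∈ trS θ 𝓘 := Set.mem_insert _ _

lemma some_mem_trS {α : List L} {A : 𝓑} {β : List L} (hA : A ≠ ⊥)
    (h1 : A ∈ Iw θ 𝓘 α) (h2 : A ∈ Iw θ 𝓘 β) : some (α, A, β) ∈ trS θ 𝓘 :=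
  Set.mem_insert_iff.mpr (Or.inr ⟨α, A, β, rfl, hA, h1, h2⟩)

lemma mem_trS_elim {α : List L} {A : 𝓑} {β : List L}
    (h : some (α, A, β) ∈ trS θ 𝓘) :
    A ≠ ⊥ ∧ A ∈ Iw θ 𝓘 α ∧ A ∈ Iw θ 𝓘 β := by
  rcases Set.mem_insert_iff.mp h with h | ⟨α', A', β', heq, hA, h1, h2⟩
  · exact absurd h (by simp)
  · obtain ⟨rfl, rfl, rfl⟩ : α = α' ∧ A = A' ∧ β = β' := by
      have := Option.some.inj heq
      exact ⟨congrArg Prod.fst this, congrArg (Prod.fst ∘ Prod.snd) this,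
        congrArg (Prod.snd ∘ Prod.snd) this⟩
    exact ⟨hA, h1, h2⟩

lemma trMul_mem (hθinf : ∀ a (x y : 𝓑), θ a (x ⊓ y) = θ a x ⊓ θ a y)
    (h𝓘F : ∀ a (x : 𝓑), θ a x ∈ 𝓘 a)
    {x y : Tr L 𝓑} (hx : x ∈ trS θ 𝓘) (hy : y ∈ trS θ 𝓘) :
    trMul θ x y ∈ trS θ 𝓘 := by
  rcases x with _ | ⟨α, A, β⟩
  · rw [trMul_none_left]; exact none_mem_trS θ 𝓘
  rcases y with _ | ⟨γ, C, δ⟩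
  · rw [trMul_none_right]; exact none_mem_trS θ 𝓘
  obtain ⟨hA, hAα, hAβ⟩ := mem_trS_elim θ 𝓘 hx
  obtain ⟨hC, hCγ, hCδ⟩ := mem_trS_elim θ 𝓘 hy
  rw [trMul_some_some]
  by_cases h1 : β <+: γ
  · obtain ⟨u, rfl⟩ := h1
    rw [pmul_left]
    by_cases hb : thetaW θ u A ⊓ C = ⊥
    · rw [if_pos hb]; exact none_mem_trS θ 𝓘
    · rw [if_neg hb]
      refine some_mem_trS θ 𝓘 hb ?_ ?_
      · exact Iw_down θ 𝓘 (Iw_theta θ 𝓘 hθinf h𝓘F hAα u) inf_le_left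
      · exact Iw_down θ 𝓘 hCδ inf_le_right
  · by_cases h2 : γ <+: β
    · obtain ⟨u, rfl⟩ := h2
      rw [pmul_right_any]
      by_cases hb : A ⊓ thetaW θ u C = ⊥
      · rw [if_pos hb]; exact none_mem_trS θ 𝓘
      · rw [if_neg hb]
        refine some_mem_trS θ 𝓘 hb ?_ ?_
        · exact Iw_down θ 𝓘 hAα inf_le_left
        · exact Iw_down θ 𝓘 (Iw_theta θ 𝓘 hθinf h𝓘F hCδ u) inf_le_right
    · rw [pmul_incomp θ _ _ _ _ _ _ h1 h2]; exact none_mem_trS θ 𝓘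

end Aux5

section Aux6
variable {𝓑 L : Type*} [GeneralizedBooleanAlgebra 𝓑] [DecidableEq L] [DecidableEq 𝓑]
variable (θ : L → 𝓑 → 𝓑)

lemma trMul_same_mid (α : List L) (A : 𝓑) (β : List L) (C : 𝓑) (δ : List L) :
    trMul θ (some (α, A, β)) (some (β, C, δ)) =
      if A ⊓ C = ⊥ then none else some (α, A ⊓ C, δ) := by
  rw [trMul_some_some]
  have h := pmul_right_any θ α A β [] C δ
  simpa [thetaW] using h

lemma tripleProd {α : List L} {A : 𝓑} {β : List L} (hA : A ≠ ⊥) :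
    trMul θ (trMul θ (some (α, A, β)) (some (β, A, α))) (some (α, A, β)) =
      some (α, A, β) := by
  rw [trMul_same_mid, inf_idem, if_neg hA, trMul_same_mid, inf_idem, if_neg hA]

lemma inv_tail {α : List L} {A : 𝓑} {β : List L} {C : 𝓑} (hA : A ≠ ⊥) (hle : A ≤ C)
    (h2 : trMul θ (trMul θ (some (β, C, α)) (some (α, A, β))) (some (β, C, α)) =
      some (β, C, α)) : C = A := by
  rw [trMul_same_mid, inf_eq_right.mpr hle,
    if_neg hA, trMul_same_mid, inf_eq_left.mpr hle, if_neg hA] at h2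
  simp only [Option.some.injEq, Prod.mk.injEq] at h2
  exact h2.2.1.symm

lemma inv_tail2 {γ : List L} {C : 𝓑} {δ u : List L} {A : 𝓑} (hA : A ≠ ⊥)
    (hle : A ≤ thetaW θ u C)
    (h2 : trMul θ (trMul θ (some (γ, C, δ)) (some (δ ++ u, A, γ ++ u)))
        (some (γ, C, δ)) = some (γ, C, δ)) :
    u = [] ∧ C = A := by
  rw [trMul_some_some, pmul_left, inf_eq_right.mpr hle, if_neg hA,
    trMul_some_some, pmul_right_any, inf_eq_left.mpr hle, if_neg hA] at h2
  simp only [Option.some.injEq, Prod.mk.injEq] at h2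
  obtain ⟨hg, hv, -⟩ := h2
  have hu : u = [] := by
    have := congrArg List.length hg
    simp at this
    exact this
  exact ⟨hu, hv.symm⟩

lemma inv_unique_aux {α : List L} {A : 𝓑} {β γ : List L} {C : 𝓑} {δ : List L}
    (hA : A ≠ ⊥)
    (h1 : trMul θ (trMul θ (some (α, A, β)) (some (γ, C, δ))) (some (α, A, β)) =
      some (α, A, β))
    (h2 : trMul θ (trMul θ (some (γ, C, δ)) (some (α, A, β))) (some (γ, C, δ)) =
      some (γ, C, δ)) :
    γ = β ∧ C = A ∧ δ = α := by
  rw [trMul_some_some] at h1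
  by_cases hbc : β <+: γ
  · obtain ⟨u, rfl⟩ := hbc
    rw [pmul_left] at h1
    by_cases hb : thetaW θ u A ⊓ C = ⊥
    · rw [if_pos hb, trMul_none_left] at h1; exact absurd h1 (by simp)
    · rw [if_neg hb, trMul_some_some] at h1
      by_cases hda : δ <+: α
      · obtain ⟨v, rfl⟩ := hda
        rw [pmul_left] at h1
        by_cases hb2 : thetaW θ v (thetaW θ u A ⊓ C) ⊓ A = ⊥
        · rw [if_pos hb2] at h1; exact absurd h1 (by simp)
        · rw [if_neg hb2] at h1
          simp only [Option.some.injEq, Prod.mk.injEq] at h1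
          obtain ⟨he1, he2, -⟩ := h1
          have hnil : u = [] ∧ v = [] := by
            have := congrArg List.length he1
            simp at this
            exact this
          obtain ⟨rfl, rfl⟩ := hnil
          simp only [List.append_nil] at h2 he2 ⊢
          simp only [thetaW] at he2
          have hle : A ≤ C := by
            calc A = A ⊓ C ⊓ A := he2.symm
            _ ≤ A ⊓ C := inf_le_left
            _ ≤ C := inf_le_right
          exact ⟨by simp, inv_tail θ hA hle h2, by simp⟩
      · by_cases had : α <+: δ
        · obtain ⟨v, rfl⟩ := had
          rw [pmul_right_any] at h1
          by_cases hb2 : (thetaW θ u A ⊓ C) ⊓ thetaW θ v A = ⊥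
          · rw [if_pos hb2] at h1; exact absurd h1 (by simp)
          · rw [if_neg hb2] at h1
            simp only [Option.some.injEq, Prod.mk.injEq] at h1
            obtain ⟨he1, he2, he3⟩ := h1
            have hu : u = [] := by
              have := congrArg List.length he1
              simp at this
              exact this
            have hv : v = [] := by
              have := congrArg List.length he3
              simp at this
              exact this
            subst hu; subst hv
            simp only [List.append_nil] at h2 he2 ⊢
            simp only [thetaW] at he2
            have hle : A ≤ C := by
              calc A = A ⊓ C ⊓ A := he2.symm
              _ ≤ A ⊓ C := inf_le_left
              _ ≤ C := inf_le_right
            exact ⟨by simp, inv_tail θ hA hle h2, by simp⟩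
        · rw [pmul_incomp θ _ _ _ _ _ _ hda had] at h1
          exact absurd h1 (by simp)
  · by_cases hcb : γ <+: β
    · obtain ⟨u, rfl⟩ := hcb
      rw [pmul_right_any] at h1
      by_cases hb : A ⊓ thetaW θ u C = ⊥
      · rw [if_pos hb, trMul_none_left] at h1; exact absurd h1 (by simp)
      · rw [if_neg hb, trMul_some_some] at h1
        by_cases hda : δ ++ u <+: α
        · obtain ⟨v, rfl⟩ := hda
          rw [pmul_left] at h1
          by_cases hb2 : thetaW θ v (A ⊓ thetaW θ u C) ⊓ A = ⊥
          · rw [if_pos hb2] at h1; exact absurd h1 (by simp)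
          · rw [if_neg hb2] at h1
            simp only [Option.some.injEq, Prod.mk.injEq] at h1
            obtain ⟨he1, he2, -⟩ := h1
            have hv : v = [] := by
              have := congrArg List.length he1
              simp at this
              exact this
            subst hv
            simp only [List.append_nil] at h2 he2 ⊢
            simp only [thetaW] at he2
            have hle : A ≤ thetaW θ u C := by
              calc A = A ⊓ thetaW θ u C ⊓ A := he2.symm
              _ ≤ A ⊓ thetaW θ u C := inf_le_left
              _ ≤ thetaW θ u C := inf_le_right
            obtain ⟨rfl, hCA⟩ := inv_tail2 θ hA hle h2
            exact ⟨by simp, hCA, by simp⟩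
        · by_cases had : α <+: δ ++ u
          · obtain ⟨v, hveq⟩ := had
            rw [← hveq, pmul_right_any] at h1
            by_cases hb2 : (A ⊓ thetaW θ u C) ⊓ thetaW θ v A = ⊥
            · rw [if_pos hb2] at h1; exact absurd h1 (by simp)
            · rw [if_neg hb2] at h1
              simp only [Option.some.injEq, Prod.mk.injEq] at h1
              obtain ⟨-, he2, he3⟩ := h1
              have hv : v = [] := by
                have := congrArg List.length he3
                simp at this
                exact this
              subst hv
              have hα : α = δ ++ u := by simpa using hveq
              subst hα
              simp only [thetaW] at he2
              have hle : A ≤ thetaW θ u C := by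
                calc A = A ⊓ thetaW θ u C ⊓ A := he2.symm
                _ ≤ A ⊓ thetaW θ u C := inf_le_left
                _ ≤ thetaW θ u C := inf_le_right
              obtain ⟨rfl, hCA⟩ := inv_tail2 θ hA hle h2
              exact ⟨by simp, hCA, by simp⟩
          · rw [pmul_incomp θ _ _ _ _ _ _ hda had] at h1
            exact absurd h1 (by simp)
    · rw [pmul_incomp θ _ _ _ _ _ _ hbc hcb, trMul_none_left] at h1
      exact absurd h1 (by simp)

end Aux6

/-- The set S = {(α,A,β) : α,β ∈ L*, ∅ ≠ A ∈ I_α ∩ I_β} ∪ {0} with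
the stated multiplication is an inverse semigroup (closed under multiplication,
associative, and every element has a unique generalized inverse — for (α,A,β)
given by (β,A,α)), whose nonzero idempotents are exactly the elements of the
form (α,A,α). -/
theorem stmt7 {𝓑 L : Type*} [GeneralizedBooleanAlgebra 𝓑] [DecidableEq L]
    [DecidableEq 𝓑] (θ : L → 𝓑 → 𝓑) (𝓘 : L → Set 𝓑)
    (hθbot : ∀ a, θ a ⊥ = ⊥)
    (hθsup : ∀ a (x y : 𝓑), θ a (x ⊔ y) = θ a x ⊔ θ a y)
    (hθinf : ∀ a (x y : 𝓑), θ a (x ⊓ y) = θ a x ⊓ θ a y)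
    (h𝓘sup : ∀ a, ∀ x ∈ 𝓘 a, ∀ y ∈ 𝓘 a, x ⊔ y ∈ 𝓘 a)
    (h𝓘down : ∀ a, ∀ x ∈ 𝓘 a, ∀ y : 𝓑, y ≤ x → y ∈ 𝓘 a)
    (h𝓘F : ∀ a (x : 𝓑), θ a x ∈ 𝓘 a) :
    -- S is closed under the multiplication
    (∀ x ∈ trS θ 𝓘, ∀ y ∈ trS θ 𝓘, trMul θ x y ∈ trS θ 𝓘) ∧
    -- the multiplication is associative on S
    (∀ x ∈ trS θ 𝓘, ∀ y ∈ trS θ 𝓘, ∀ z ∈ trS θ 𝓘,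
      trMul θ (trMul θ x y) z = trMul θ x (trMul θ y z)) ∧
    -- every element of S has a unique generalized inverse in S
    (∀ x ∈ trS θ 𝓘, ∃! y, y ∈ trS θ 𝓘 ∧
      trMul θ (trMul θ x y) x = x ∧ trMul θ (trMul θ y x) y = y) ∧
    -- the involution (α,A,β)* = (β,A,α) gives the generalized inverse
    (∀ α A β, some (α, A, β) ∈ trS θ 𝓘 →
      trMul θ (trMul θ (some (α, A, β)) (some (β, A, α))) (some (α, A, β)) =
          some (α, A, β) ∧
      trMul θ (trMul θ (some (β, A, α)) (some (α, A, β))) (some (β, A, α)) =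
          some (β, A, α)) ∧
    -- the nonzero idempotents are exactly the elements of the form (α, A, α)
    (∀ x ∈ trS θ 𝓘, x ≠ none →
      (trMul θ x x = x ↔ ∃ α A, x = some (α, A, α))) := by
  
  refine ⟨fun x hx y hy => trMul_mem θ 𝓘 hθinf h𝓘F hx hy,
    fun x _ y _ z _ => trMul_assoc θ hθbot hθinf x y z, ?_, ?_, ?_⟩
  · intro x hx
    rcases x with _ | ⟨α, A, β⟩
    · refine ⟨none, ⟨none_mem_trS θ 𝓘,
        by rw [trMul_none_left, trMul_none_left],
        by rw [trMul_none_left, trMul_none_left]⟩, ?_⟩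
      rintro y ⟨hy, -, hy2⟩
      rw [trMul_none_right, trMul_none_left] at hy2
      exact hy2.symm
    · obtain ⟨hA, hAα, hAβ⟩ := mem_trS_elim θ 𝓘 hx
      refine ⟨some (β, A, α),
        ⟨some_mem_trS θ 𝓘 hA hAβ hAα, tripleProd θ hA, tripleProd θ hA⟩, ?_⟩
      rintro y ⟨hy, hy1, hy2⟩
      rcases y with _ | ⟨γ, C, δ⟩
      · rw [trMul_none_right, trMul_none_left] at hy1
        exact absurd hy1 (by simp)
      · obtain ⟨rfl, rfl, rfl⟩ := inv_unique_aux θ hA hy1 hy2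
        rfl
  · intro α A β h
    obtain ⟨hA, -, -⟩ := mem_trS_elim θ 𝓘 h
    exact ⟨tripleProd θ hA, tripleProd θ hA⟩
  · intro x hx hne
    rcases x with _ | ⟨α, A, β⟩
    · exact absurd rfl hne
    obtain ⟨hA, -, -⟩ := mem_trS_elim θ 𝓘 hx
    constructor
    · intro hxx
      rw [trMul_some_some] at hxx
      by_cases h1 : β <+: α
      · obtain ⟨u, rfl⟩ := h1
        rw [pmul_left] at hxx
        by_cases hb : thetaW θ u A ⊓ A = ⊥
        · rw [if_pos hb] at hxx; exact absurd hxx (by simp)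
        · rw [if_neg hb] at hxx
          simp only [Option.some.injEq, Prod.mk.injEq] at hxx
          obtain ⟨he1, -, -⟩ := hxx
          have hu : u = [] := by
            have := congrArg List.length he1; simp at this; exact this
          subst hu
          exact ⟨β, A, by simp⟩
      · by_cases h2 : α <+: β
        · obtain ⟨u, rfl⟩ := h2
          rw [pmul_right_any] at hxx
          by_cases hb : A ⊓ thetaW θ u A = ⊥
          · rw [if_pos hb] at hxx; exact absurd hxx (by simp)
          · rw [if_neg hb] at hxx
            simp only [Option.some.injEq, Prod.mk.injEq] at hxx
            obtain ⟨-, -, he3⟩ := hxx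
            have hu : u = [] := by
              have := congrArg List.length he3; simp at this; exact this
            subst hu
            exact ⟨α, A, by simp⟩
        · rw [pmul_incomp θ _ _ _ _ _ _ h1 h2] at hxx
          exact absurd hxx (by simp)
    · rintro ⟨α', A', heq⟩
      simp only [Option.some.injEq, Prod.mk.injEq] at heq
      obtain ⟨rfl, rfl, rfl⟩ := heq
      rw [trMul_same_mid, inf_idem, if_neg hA]
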